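/- If 0 < c < c* (so that μ = 1/(1−cM) > 0), then E₀ = μ · ∫₁^X f(z;μ,λ,1/2) dz; and if c > c* (so that μ̃ = 1/(cM−1) > 0), then E₀ = μ̃ · exp(−2λ/μ̃) · ∫₁^X f(z;μ̃,λ,1/2) dz. -/

import Mathlib

open MeasureTheory Real

/-- P.d.f. of the normal distribution with mean `m` and variance `s2`. -/
noncomputable def normalPdf (m s2 x : ℝ) : ℝ :=
  (Real.sqrt (2 * Real.pi * s2))⁻¹ * Real.exp (-(x - m) ^ 2 / (2 * s2))

/-- The elementary component
`E_k = ∫₀^{c(t−v)/(u+cv)} (1+x)^{−k} φ_{cM(1+x), c²D²(1+x)/(u+cv)}(x) dx`. -/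
noncomputable def elemComp (u c v t M D : ℝ) (k : ℕ) : ℝ :=
  ∫ x in (0:ℝ)..(c * (t - v) / (u + c * v)),
    ((1 + x) ^ k)⁻¹ *
      normalPdf (c * M * (1 + x)) (c ^ 2 * D ^ 2 * (1 + x) / (u + c * v)) x

/-- The exponential factor `E(z; μ, λ) = exp(−λ(z−μ)²/(2μ²z))`. -/
noncomputable def gigE (z μ lam : ℝ) : ℝ :=
  Real.exp (-(lam * (z - μ) ^ 2) / (2 * μ ^ 2 * z))

/-- Generalized inverse Gaussian density with `p = 1/2`. -/
noncomputable def gigPdfHalf (μ lam z : ℝ) : ℝ :=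
  Real.sqrt lam / (μ * Real.sqrt (2 * Real.pi)) * z ^ (-(1:ℝ)/2) * gigE z μ lam

/-- Generalized inverse Gaussian density with `p = −1/2`. -/
noncomputable def gigPdfNegHalf (μ lam z : ℝ) : ℝ :=
  Real.sqrt lam / Real.sqrt (2 * Real.pi) * z ^ (-(3:ℝ)/2) * gigE z μ lam

/-- Generalized inverse Gaussian density with `p = −3/2`. -/
noncomputable def gigPdfNeg3Half (μ lam z : ℝ) : ℝ :=
  lam ^ ((3:ℝ)/2) * μ / (Real.sqrt (2 * Real.pi) * (lam + μ)) * z ^ (-(5:ℝ)/2) * gigE z μ lam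

/-- Generalized inverse Gaussian density with `p = −5/2`. -/
noncomputable def gigPdfNeg5Half (μ lam z : ℝ) : ℝ :=
  lam ^ ((5:ℝ)/2) * μ ^ 2 / (Real.sqrt (2 * Real.pi) * (lam ^ 2 + 3 * lam * μ + 3 * μ ^ 2))
    * z ^ (-(7:ℝ)/2) * gigE z μ lam

/-- Theorem on `E₀` in terms of the generalized inverse Gaussian c.d.f. with `p = 1/2`. -/
theorem elemComp_zero_eq (u c v t M D : ℝ)
    (hu : 0 < u) (hc : 0 < c) (hv : 0 ≤ v) (ht : v < t) (hM : 0 < M) (hD : 0 < D) :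
    (c < 1 / M →
      elemComp u c v t M D 0
        = (1 / (1 - c * M)) *
            ∫ z in (1:ℝ)..(c * (t - v) / (u + c * v) + 1),
              gigPdfHalf (1 / (1 - c * M)) ((u + c * v) / (c ^ 2 * D ^ 2)) z)
    ∧ (1 / M < c →
      elemComp u c v t M D 0
        = (1 / (c * M - 1)) *
            Real.exp (-2 * ((u + c * v) / (c ^ 2 * D ^ 2)) / (1 / (c * M - 1))) *
            ∫ z in (1:ℝ)..(c * (t - v) / (u + c * v) + 1),
              gigPdfHalf (1 / (c * M - 1)) ((u + c * v) / (c ^ 2 * D ^ 2)) z) := by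
  have hucv : 0 < u + c * v := by nlinarith
  have htv : 0 < t - v := by linarith
  have hL0 : 0 < c * (t - v) / (u + c * v) := by positivity
  set lam : ℝ := (u + c * v) / (c ^ 2 * D ^ 2) with hlamdef
  have hlam : 0 < lam := by positivity
  have hpi : (0:ℝ) < Real.sqrt (2 * Real.pi) := Real.sqrt_pos.mpr (by positivity)
  have hstep : elemComp u c v t M D 0
      = ∫ z in (1:ℝ)..(c * (t - v) / (u + c * v) + 1),
          normalPdf (c * M * z) (c ^ 2 * D ^ 2 * z / (u + c * v)) (z - 1) := by
    unfold elemComp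
    have h1 := intervalIntegral.integral_comp_add_right
      (a := (0:ℝ)) (b := c * (t - v) / (u + c * v))
      (fun z => normalPdf (c * M * z) (c ^ 2 * D ^ 2 * z / (u + c * v)) (z - 1)) 1
    simp only [zero_add] at h1
    rw [← h1]
    apply intervalIntegral.integral_congr
    intro x _
    simp [add_comm x 1]
  have key : ∀ z : ℝ, 1 ≤ z → ∀ μ : ℝ, μ ≠ 0 →
      normalPdf (c * M * z) (c ^ 2 * D ^ 2 * z / (u + c * v)) (z - 1)
        = Real.sqrt lam / Real.sqrt (2 * Real.pi) * (Real.sqrt z)⁻¹ *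
            Real.exp (-(z - 1 - c * M * z) ^ 2 / (2 * (z / lam))) := by
    intro z hz μ hμ
    have hz0 : (0:ℝ) < z := lt_of_lt_of_le one_pos hz
    have hs2 : c ^ 2 * D ^ 2 * z / (u + c * v) = z / lam := by
      rw [hlamdef]; field_simp
    unfold normalPdf
    rw [hs2]
    have hsq : Real.sqrt (2 * Real.pi * (z / lam))
        = Real.sqrt (2 * Real.pi) * Real.sqrt z / Real.sqrt lam := by
      rw [Real.sqrt_mul (by positivity), Real.sqrt_div hz0.le]
      ring
    rw [hsq]
    have hsz : (0:ℝ) < Real.sqrt z := Real.sqrt_pos.mpr hz0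
    have hsl : (0:ℝ) < Real.sqrt lam := Real.sqrt_pos.mpr hlam
    field_simp
  have hrpow : ∀ z : ℝ, (0:ℝ) < z → z ^ (-(1:ℝ)/2) = (Real.sqrt z)⁻¹ := by
    intro z hz0
    rw [neg_div, Real.rpow_neg hz0.le, ← Real.sqrt_eq_rpow]
  constructor
  · intro h
    have hcM : c * M < 1 := (lt_div_iff₀ hM).mp h
    have hpos : (0:ℝ) < 1 - c * M := by linarith
    rw [hstep, ← intervalIntegral.integral_const_mul]
    apply intervalIntegral.integral_congr
    intro z hz
    rw [Set.uIcc_of_le (by linarith : (1:ℝ) ≤ c * (t - v) / (u + c * v) + 1)] at hz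
    have hz1 : 1 ≤ z := hz.1
    have hz0 : (0:ℝ) < z := lt_of_lt_of_le one_pos hz1
    dsimp only
    rw [key z hz1 1 one_ne_zero]
    unfold gigPdfHalf gigE
    rw [hrpow z hz0]
    have hexp : -(z - 1 - c * M * z) ^ 2 / (2 * (z / lam))
        = -(lam * (z - 1 / (1 - c * M)) ^ 2) / (2 * (1 / (1 - c * M)) ^ 2 * z) := by
      field_simp
      ring
    rw [hexp]
    have hsz : (0:ℝ) < Real.sqrt z := Real.sqrt_pos.mpr hz0
    have hsl : (0:ℝ) < Real.sqrt lam := Real.sqrt_pos.mpr hlam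
    field_simp
  · intro h
    have hcM : 1 < c * M := (div_lt_iff₀ hM).mp h
    have hpos : (0:ℝ) < c * M - 1 := by linarith
    rw [hstep, mul_assoc, ← intervalIntegral.integral_const_mul,
        ← intervalIntegral.integral_const_mul]
    apply intervalIntegral.integral_congr
    intro z hz
    rw [Set.uIcc_of_le (by linarith : (1:ℝ) ≤ c * (t - v) / (u + c * v) + 1)] at hz
    have hz1 : 1 ≤ z := hz.1
    have hz0 : (0:ℝ) < z := lt_of_lt_of_le one_pos hz1
    dsimp only
    rw [key z hz1 1 one_ne_zero]
    unfold gigPdfHalf gigE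
    rw [hrpow z hz0]
    have hexp : -(z - 1 - c * M * z) ^ 2 / (2 * (z / lam))
        = -2 * lam / (1 / (c * M - 1))
          + -(lam * (z - 1 / (c * M - 1)) ^ 2) / (2 * (1 / (c * M - 1)) ^ 2 * z) := by
      field_simp
      ring
    rw [hexp, Real.exp_add]
    have hsz : (0:ℝ) < Real.sqrt z := Real.sqrt_pos.mpr hz0
    have hsl : (0:ℝ) < Real.sqrt lam := Real.sqrt_pos.mpr hlam
    field_simp
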